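/- arXiv:2305.08137 — 2 statements merged into one kernel-verified Lean document; each statement's English description precedes it below -/
import Mathlib

section
/- For all θ ∈ [0, 2π], the point L(t_θ) = (R_0 − 2r + V_T t_θ)(sin θ, cos θ), after expanding radially a distance V_T(t_{2π} − t_θ), remains within distance R_0 − r + V_T t_{2π} of the point (0, r). Equivalently, |L(t_θ) − (0,r)| + V_T(t_{2π} − t_θ) ≤ R_0 − r + V_T t_{2π}. -/
/-- Confinement in the drifting spiral sweep: for all `θ ∈ [0, 2π]`, the point
`L(t_θ) = (R_0 − 2r + V_T t_θ)(sin θ, cos θ)`, after expanding radially a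
distance `V_T (t_{2π} − t_θ)`, remains within distance `R_0 − r + V_T t_{2π}`
of the point `(0, r)`. -/
theorem drifting_spiral_confinement (Vs VT R0 r : ℝ) (hr : 0 < r)
    (hR : 2 * r < R0) (hVT : 0 < VT) (hV : VT < Vs) :
    ∀ θ ∈ Set.Icc (0 : ℝ) (2 * Real.pi),
      Real.sqrt
          (((R0 - 2 * r + VT * ((R0 - r) *
                (Real.exp (θ * VT / Real.sqrt (Vs ^ 2 - VT ^ 2)) - 1) / VT)) *
              Real.sin θ) ^ 2 +
            ((R0 - 2 * r + VT * ((R0 - r) *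
                (Real.exp (θ * VT / Real.sqrt (Vs ^ 2 - VT ^ 2)) - 1) / VT)) *
              Real.cos θ - r) ^ 2) +
        VT * ((R0 - r) *
              (Real.exp (2 * Real.pi * VT / Real.sqrt (Vs ^ 2 - VT ^ 2)) - 1) / VT
            - (R0 - r) *
              (Real.exp (θ * VT / Real.sqrt (Vs ^ 2 - VT ^ 2)) - 1) / VT) ≤
      R0 - r + VT * ((R0 - r) *
          (Real.exp (2 * Real.pi * VT / Real.sqrt (Vs ^ 2 - VT ^ 2)) - 1) / VT) := by
  intro θ hθ
  obtain ⟨hθ0, hθ2⟩ := hθ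
  have hVT' : VT ≠ 0 := ne_of_gt hVT
  set c := Real.sqrt (Vs ^ 2 - VT ^ 2) with hc
  have hcpos : 0 < c := Real.sqrt_pos.2 (by nlinarith)
  have hE : 0 ≤ Real.exp (θ * VT / c) - 1 := by
    have : (1:ℝ) ≤ Real.exp (θ * VT / c) := by
      rw [show (1:ℝ) = Real.exp 0 by simp]
      exact Real.exp_le_exp.2 (by positivity)
    linarith
  set E := Real.exp (θ * VT / c) - 1 with hEdef
  have hE2 : 0 ≤ Real.exp (2 * Real.pi * VT / c) - 1 := by
    have : (1:ℝ) ≤ Real.exp (2 * Real.pi * VT / c) := by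
      rw [show (1:ℝ) = Real.exp 0 by simp]
      refine Real.exp_le_exp.2 (by positivity)
    linarith
  have hVcancel : VT * ((R0 - r) * E / VT) = (R0 - r) * E := by
    field_simp
  set a := R0 - 2 * r + VT * ((R0 - r) * E / VT) with hadef
  have ha : a = R0 - 2 * r + (R0 - r) * E := by rw [hadef, hVcancel]
  have ha0 : 0 ≤ a := by
    rw [ha]; nlinarith
  have hcos1 : Real.cos θ ≤ 1 := Real.cos_le_one θ
  have hcos2 : -1 ≤ Real.cos θ := Real.neg_one_le_cos θ
  have hpyth : Real.sin θ ^ 2 + Real.cos θ ^ 2 = 1 := Real.sin_sq_add_cos_sq θ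
  have hsqrt : Real.sqrt ((a * Real.sin θ) ^ 2 + (a * Real.cos θ - r) ^ 2) ≤ a + r := by
    have hle : (a * Real.sin θ) ^ 2 + (a * Real.cos θ - r) ^ 2 ≤ (a + r) ^ 2 := by
      have key : (a * Real.sin θ) ^ 2 + (a * Real.cos θ - r) ^ 2
          = a ^ 2 * (Real.sin θ ^ 2 + Real.cos θ ^ 2) + r ^ 2
            - 2 * (a * r) * Real.cos θ := by ring
      rw [hpyth, mul_one] at key
      have hprod : 0 ≤ a * r * (1 + Real.cos θ) :=
        mul_nonneg (mul_nonneg ha0 hr.le) (by linarith)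
      nlinarith [key]
    calc Real.sqrt ((a * Real.sin θ) ^ 2 + (a * Real.cos θ - r) ^ 2)
        ≤ Real.sqrt ((a + r) ^ 2) := Real.sqrt_le_sqrt hle
      _ = a + r := Real.sqrt_sq (by positivity)
  have hcancel2 : VT * ((R0 - r) * (Real.exp (2 * Real.pi * VT / c) - 1) / VT
      - (R0 - r) * E / VT) = (R0 - r) * (Real.exp (2 * Real.pi * VT / c) - 1)
      - (R0 - r) * E := by
    field_simp
  rw [hcancel2]
  have h3 : VT * ((R0 - r) * (Real.exp (2 * Real.pi * VT / c) - 1) / VT)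
      = (R0 - r) * (Real.exp (2 * Real.pi * VT / c) - 1) := by field_simp
  rw [h3]
  clear_value a E
  linarith [hsqrt, ha]
end

section
/- If R_0/r > √(4/(ln 2)² + 1/π²), then the universal lower bound speed V_LB = π R_0 V_T / r satisfies V_LB > V_T √(4π²/(ln 2)² + 1); consequently any sweeper moving at speed V_s ≥ V_LB automatically satisfies the end-game condition r(e^{2π V_T/√(V_s² − V_T²)} − 1) < 2r. -/
/-- If `R_0/r > √(4/(ln 2)² + 1/π²)`, then the universal lower bound
`V_LB = π R_0 V_T/r` exceeds `V_T √(4π²/(ln 2)² + 1)`, and consequently any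
sweeper speed `V_s ≥ V_LB` satisfies the end-game condition
`r(e^{2π V_T/√(V_s² − V_T²)} − 1) < 2r`. -/
theorem lower_bound_implies_end_game (VT R0 r : ℝ) (hVT : 0 < VT) (hr : 0 < r)
    (hR0 : 0 < R0)
    (hratio : R0 / r > Real.sqrt (4 / (Real.log 2) ^ 2 + 1 / Real.pi ^ 2)) :
    Real.pi * R0 * VT / r > VT * Real.sqrt (4 * Real.pi ^ 2 / (Real.log 2) ^ 2 + 1) ∧
    ∀ Vs : ℝ, Vs ≥ Real.pi * R0 * VT / r →
      r * (Real.exp (2 * Real.pi * VT / Real.sqrt (Vs ^ 2 - VT ^ 2)) - 1) < 2 * r := by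
  have hπ := Real.pi_pos
  have hlog2 : (0:ℝ) < Real.log 2 := Real.log_pos (by norm_num)
  set A : ℝ := 4 * Real.pi ^ 2 / (Real.log 2) ^ 2 + 1 with hA
  have hA0 : (0:ℝ) ≤ A := by positivity
  have hA1 : (1:ℝ) ≤ A := le_add_of_nonneg_left (by positivity)
  have hsqrtA1 : (1:ℝ) ≤ Real.sqrt A := by
    rw [show (1:ℝ) = Real.sqrt 1 by simp]
    exact Real.sqrt_le_sqrt hA1
  have hsqrt_eq : Real.sqrt (4 / (Real.log 2) ^ 2 + 1 / Real.pi ^ 2)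
      = Real.sqrt A / Real.pi := by
    rw [show 4 / (Real.log 2) ^ 2 + 1 / Real.pi ^ 2 = A / Real.pi ^ 2 by
      rw [hA]; field_simp]
    rw [Real.sqrt_div hA0, Real.sqrt_sq hπ.le]
  rw [hsqrt_eq] at hratio
  have h1 : Real.pi * R0 * VT / r > VT * Real.sqrt A := by
    have h2 : Real.sqrt A < Real.pi * (R0 / r) := by
      rw [mul_comm]
      exact (div_lt_iff₀ hπ).mp hratio
    have := mul_lt_mul_of_pos_left h2 hVT
    calc VT * Real.sqrt A < VT * (Real.pi * (R0 / r)) := this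
      _ = Real.pi * R0 * VT / r := by ring
  refine ⟨h1, fun Vs hVs => ?_⟩
  have hVsA : Vs > VT * Real.sqrt A := lt_of_lt_of_le h1 hVs
  have hVsVT : VT < Vs := by nlinarith
  have hsqA : (Real.sqrt A) ^ 2 = A := Real.sq_sqrt hA0
  have hkey : (2 * Real.pi * VT / Real.log 2) ^ 2 < Vs ^ 2 - VT ^ 2 := by
    have hpos : (0:ℝ) < VT * Real.sqrt A := by nlinarith
    have h3 : (VT * Real.sqrt A) ^ 2 < Vs ^ 2 := by nlinarith
    have heq : (VT * Real.sqrt A) ^ 2 = VT ^ 2 * (4 * Real.pi ^ 2 / (Real.log 2) ^ 2) + VT ^ 2 := by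
      rw [mul_pow, hsqA, hA]; ring
    have heq2 : (2 * Real.pi * VT / Real.log 2) ^ 2
        = VT ^ 2 * (4 * Real.pi ^ 2 / (Real.log 2) ^ 2) := by
      field_simp; ring
    rw [heq2]
    linarith [heq ▸ h3]
  have hspos : (0:ℝ) < 2 * Real.pi * VT / Real.log 2 := by positivity
  have hsqrt_gt : 2 * Real.pi * VT / Real.log 2 < Real.sqrt (Vs ^ 2 - VT ^ 2) := by
    have := Real.sqrt_lt_sqrt (by positivity) hkey
    rwa [Real.sqrt_sq hspos.le] at this
  have hs0 : (0:ℝ) < Real.sqrt (Vs ^ 2 - VT ^ 2) := lt_trans hspos hsqrt_gt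
  have harg : 2 * Real.pi * VT / Real.sqrt (Vs ^ 2 - VT ^ 2) < Real.log 2 := by
    rw [div_lt_iff₀ hs0]
    rw [div_lt_iff₀ hlog2] at hsqrt_gt
    linarith
  have hexp : Real.exp (2 * Real.pi * VT / Real.sqrt (Vs ^ 2 - VT ^ 2)) < 2 := by
    calc Real.exp (2 * Real.pi * VT / Real.sqrt (Vs ^ 2 - VT ^ 2))
        < Real.exp (Real.log 2) := Real.exp_lt_exp.mpr harg
      _ = 2 := Real.exp_log (by norm_num)
  nlinarith
end
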